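/- arXiv:2506.11910 — 6 statements merged into one kernel-verified Lean document; each statement's English description precedes it below -/
import Mathlib

section
/- Let p be a prime number, A a commutative ring containing the element p (e.g. a Z_p-algebra), and E ∈ A[X] a monic polynomial of degree e ≥ 1 all of whose non-leading coefficients lie in p·A (for instance the image in A[X] of an Eisenstein polynomial over Z_p). Then E lies in the ideal (p, X) of A[X], the ideal power (p, X)^e is contained in the ideal (p, E), and consequently the (p,E)-adic topology and the (p,X)-adic topology on A[X] coincide. -/
open Polynomial

lemma sup_pow_le_aux {R : Type*} [CommRing R] (P Q : Ideal R) (n : ℕ) :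
    (P ⊔ Q) ^ n ≤ P ⊔ Q ^ n := by
  induction n with
  | zero => simp
  | succ n ih =>
    calc (P ⊔ Q) ^ (n + 1) = (P ⊔ Q) ^ n * (P ⊔ Q) := pow_succ _ _
      _ ≤ (P ⊔ Q ^ n) * (P ⊔ Q) := Ideal.mul_mono_left ih
      _ ≤ P ⊔ Q ^ (n + 1) := by
          rw [Ideal.sup_mul, Ideal.mul_sup, Ideal.mul_sup]
          refine sup_le (sup_le ?_ ?_) (sup_le ?_ ?_)
          · exact le_sup_left.trans' Ideal.mul_le_right
          · exact le_sup_left.trans' Ideal.mul_le_left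
          · exact le_sup_left.trans' Ideal.mul_le_right
          · rw [← pow_succ]; exact le_sup_right

/-- Let `p` be a prime, `A` a commutative ring, and `E ∈ A[X]` a monic polynomial of
degree `e ≥ 1` all of whose non-leading coefficients lie in `p·A`.  Then `E` lies in the
ideal `(p, X)`, `(p, X)^e ⊆ (p, E)`, and the `(p,E)`-adic and `(p,X)`-adic topologies on
`A[X]` coincide. -/
theorem eisenstein_mem_span_and_span_pow_le_and_adicTopology_eq
    {A : Type*} [CommRing A] (p : ℕ) (hp : p.Prime)
    (E : Polynomial A) (hE : E.Monic) (e : ℕ) (hdeg : E.natDegree = e) (he : 1 ≤ e)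
    (hcoeff : ∀ i < e, E.coeff i ∈ Ideal.span ({(p : A)} : Set A)) :
    E ∈ Ideal.span ({(p : A[X]), X} : Set A[X]) ∧
      Ideal.span ({(p : A[X]), X} : Set A[X]) ^ e ≤ Ideal.span ({(p : A[X]), E} : Set A[X]) ∧
      (Ideal.span ({(p : A[X]), E} : Set A[X])).adicTopology =
        (Ideal.span ({(p : A[X]), X} : Set A[X])).adicTopology := by
  set I := Ideal.span ({(p : A[X]), X} : Set A[X]) with hI
  set J := Ideal.span ({(p : A[X]), E} : Set A[X]) with hJ
  have hpI : (p : A[X]) ∈ I := Ideal.subset_span (by simp)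
  have hXI : (X : A[X]) ∈ I := Ideal.subset_span (by simp)
  have hpJ : (p : A[X]) ∈ J := Ideal.subset_span (by simp)
  have hEJ : E ∈ J := Ideal.subset_span (by simp)
  -- part 1
  have h1 : E ∈ I := by
    obtain ⟨a, ha⟩ := Ideal.mem_span_singleton.mp (hcoeff 0 he)
    obtain ⟨q, hq⟩ : (X : A[X]) ∣ E - C (E.coeff 0) := by
      rw [Polynomial.X_dvd_iff]; simp
    have : E = X * q + (p : A[X]) * C a := by
      rw [← hq, ha, C_mul, C_eq_natCast]; ring
    rw [this]
    exact I.add_mem (I.mul_mem_right _ hXI) (I.mul_mem_right _ hpI)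
  -- E - X^e ∈ (p)
  have hdvd : (C ((p : ℕ) : A)) ∣ E - X ^ e := by
    rw [Polynomial.C_dvd_iff_dvd_coeff]
    intro i
    rcases lt_trichotomy i e with h | h | h
    · obtain ⟨a, ha⟩ := Ideal.mem_span_singleton.mp (hcoeff i h)
      refine ⟨a, ?_⟩
      rw [coeff_sub, coeff_X_pow, if_neg h.ne, sub_zero, ha]
    · subst h
      simp [coeff_sub, coeff_X_pow, ← hdeg, hE.coeff_natDegree]
    · have h1 : E.coeff i = 0 := coeff_eq_zero_of_natDegree_lt (by omega)
      rw [coeff_sub, coeff_X_pow, if_neg h.ne', h1, sub_zero]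
      exact dvd_zero _
  have hXeJ : (X : A[X]) ^ e ∈ J := by
    obtain ⟨q, hq⟩ := hdvd
    have : (X : A[X]) ^ e = E - (p : A[X]) * q := by
      have : (p : A[X]) = C ((p : ℕ) : A) := by push_cast; rfl
      rw [this, ← hq]; ring
    rw [this]
    exact J.sub_mem hEJ (J.mul_mem_right _ hpJ)
  -- part 2
  have h2 : I ^ e ≤ J := by
    have : I = Ideal.span {(p : A[X])} ⊔ Ideal.span {(X : A[X])} := by
      rw [hI, Ideal.span_insert]
    rw [this]
    refine (sup_pow_le_aux _ _ e).trans (sup_le ?_ ?_)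
    · rw [Ideal.span_singleton_le_iff_mem]; exact hpJ
    · rw [Ideal.span_singleton_pow, Ideal.span_singleton_le_iff_mem]; exact hXeJ
  -- J ≤ I
  have hJI : J ≤ I := by
    rw [hJ, Ideal.span_le]
    rintro x (rfl | rfl)
    exacts [hpI, h1]
  -- part 3
  refine ⟨h1, h2, ?_⟩
  apply IsTopologicalAddGroup.ext
    (J.adic_basis.toRing_subgroups_basis.toRingFilterBasis.toAddGroupFilterBasis.isTopologicalAddGroup)
    (I.adic_basis.toRing_subgroups_basis.toRingFilterBasis.toAddGroupFilterBasis.isTopologicalAddGroup)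
  apply J.hasBasis_nhds_zero_adic.ext I.hasBasis_nhds_zero_adic
  · intro n _
    refine ⟨e * n, trivial, ?_⟩
    have : I ^ (e * n) ≤ J ^ n := by
      rw [pow_mul]
      exact Ideal.pow_right_mono h2 n
    exact_mod_cast this
  · intro n _
    refine ⟨n, trivial, ?_⟩
    exact_mod_cast Ideal.pow_right_mono hJI n
end

section
/- Let p be a prime number and A a commutative ring. There is a ring isomorphism between the (p,X)-adic completion of the polynomial ring A[X], i.e. the inverse limit over n of A[X]/(p,X)^n, and the power series ring over the p-adic completion of A, i.e. (lim_n A/p^n A)⟦X⟧, and this isomorphism is compatible with the canonical maps from A[X] to both sides. -/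
open Polynomial

namespace AdicPolyPS

variable {A : Type*} [CommRing A] (p : ℕ)

/-- The ideal `(p)` of `A`. -/
private abbrev Iid (A : Type*) [CommRing A] (p : ℕ) : Ideal A := Ideal.span {(p : A)}

/-- The ideal `(p, X)` of `A[X]`. -/
private noncomputable abbrev Jid (A : Type*) [CommRing A] (p : ℕ) : Ideal A[X] :=
  Ideal.span ({(p : A[X]), X} : Set A[X])

private theorem smul_top_eq {R : Type*} [CommRing R] (K : Ideal R) : (K • ⊤ : Ideal R) = K := by
  ext x; simp

private theorem p_mem_I : (p : A) ∈ Iid A p := Ideal.subset_span rfl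

private theorem p_mem_J : (p : A[X]) ∈ Jid A p := Ideal.subset_span (Set.mem_insert _ _)

private theorem X_mem_J : (X : A[X]) ∈ Jid A p :=
  Ideal.subset_span (Set.mem_insert_of_mem _ rfl)

/-- Key lemma: the `k`-th coefficient of an element of `(p,X)^m` lies in `(p)^(m-k)`. -/
private theorem coeff_mem_of_mem_pow {m : ℕ} {g : A[X]} (hg : g ∈ Jid A p ^ m) (k : ℕ) :
    g.coeff k ∈ Iid A p ^ (m - k) := by
  induction m generalizing g k with
  | zero => simpa using Submodule.mem_top
  | succ m ih =>
    rw [pow_succ] at hg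
    revert k
    refine Submodule.mul_induction_on hg (fun a ha b hb => ?_) (fun x y hx hy k => ?_)
    · intro k
      obtain ⟨u, v, rfl⟩ := Ideal.mem_span_pair.mp hb
      rw [mul_add, coeff_add]
      refine Submodule.add_mem _ ?_ ?_
      · rw [← mul_assoc, ← Polynomial.C_eq_natCast, coeff_mul_C]
        have hmem : (a * u).coeff k * (p : A) ∈ Iid A p ^ (m - k) * Iid A p :=
          Ideal.mul_mem_mul (ih (Ideal.mul_mem_right u _ ha) k) (p_mem_I p)
        rw [← pow_succ] at hmem
        exact Ideal.pow_le_pow_right (by omega) hmem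
      · rw [← mul_assoc]
        cases k with
        | zero =>
          rw [Polynomial.mul_coeff_zero, Polynomial.coeff_X_zero, mul_zero]
          exact Submodule.zero_mem _
        | succ k =>
          rw [coeff_mul_X]
          have : m + 1 - (k + 1) = m - k := by omega
          rw [this]
          exact ih (Ideal.mul_mem_right v _ ha) k
    · rw [coeff_add]
      exact Submodule.add_mem _ (hx k) (hy k)

private theorem C_mem_pow {s : ℕ} {c : A} (hc : c ∈ Iid A p ^ s) :
    (C c : A[X]) ∈ Jid A p ^ s := by
  have h1 : Ideal.map (C : A →+* A[X]) (Iid A p) ≤ Jid A p := by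
    rw [Ideal.map_le_iff_le_comap, Ideal.span_le, Set.singleton_subset_iff, SetLike.mem_coe,
      Ideal.mem_comap, Polynomial.C_eq_natCast]
    exact p_mem_J p
  have h2 : Ideal.map (C : A →+* A[X]) (Iid A p) ^ s ≤ Jid A p ^ s :=
    Ideal.pow_right_mono h1 s
  exact h2 (by rw [← Ideal.map_pow]; exact Ideal.mem_map_of_mem _ hc)

/-- Converse key lemma: if every coefficient of `g` lies in `(p)^(n-k)`, then `g ∈ (p,X)^n`. -/
private theorem mem_pow_of_coeff_mem {n : ℕ} {g : A[X]}
    (hg : ∀ k, g.coeff k ∈ Iid A p ^ (n - k)) : g ∈ Jid A p ^ n := by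
  rw [← Polynomial.sum_C_mul_X_pow_eq g, Polynomial.sum_def]
  refine Ideal.sum_mem _ (fun k _ => ?_)
  by_cases hk : n ≤ k
  · rw [show k = (k - n) + n by omega, pow_add, ← mul_assoc]
    exact Ideal.mul_mem_left _ _ (Ideal.pow_mem_pow (X_mem_J p) n)
  · have h1 : (C (g.coeff k) : A[X]) ∈ Jid A p ^ (n - k) := C_mem_pow p (hg k)
    have h2 := Ideal.mul_mem_mul h1 (Ideal.pow_mem_pow (X_mem_J p) k)
    rw [← pow_add] at h2
    rwa [show n - k + k = n by omega] at h2

/-- If two ring elements agree modulo `(p)^n`, their difference is in `(p)^(n-k)`. -/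
private theorem diff_mem {n k : ℕ} {a b : A}
    (h : Ideal.Quotient.mk ((Iid A p) ^ n • ⊤ : Ideal A) a =
      Ideal.Quotient.mk ((Iid A p) ^ n • ⊤ : Ideal A) b) :
    a - b ∈ Iid A p ^ (n - k) := by
  rw [Ideal.Quotient.eq, smul_top_eq] at h
  exact Ideal.pow_le_pow_right (Nat.sub_le n k) h

private theorem mkJ_eq_mkJ {n : ℕ} {f g : A[X]}
    (h : ∀ k, k < n → f.coeff k - g.coeff k ∈ Iid A p ^ (n - k)) :
    Ideal.Quotient.mk ((Jid A p) ^ n • ⊤ : Ideal A[X]) f =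
      Ideal.Quotient.mk ((Jid A p) ^ n • ⊤ : Ideal A[X]) g := by
  rw [Ideal.Quotient.eq, smul_top_eq]
  refine mem_pow_of_coeff_mem p (fun k => ?_)
  rw [coeff_sub]
  by_cases hk : k < n
  · exact h k hk
  · rw [show n - k = 0 by omega, pow_zero, Ideal.one_eq_top]
    trivial

/-- A chosen polynomial representative of a power series over the completion at level `n`. -/
private noncomputable def rep (F : PowerSeries (AdicCompletion (Iid A p) A)) (n : ℕ) : A[X] :=
  ∑ k ∈ Finset.range n,
    C (Function.surjInv Ideal.Quotient.mk_surjective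
      ((PowerSeries.coeff k F).val n)) * X ^ k

private theorem rep_coeff (F : PowerSeries (AdicCompletion (Iid A p) A)) (n k : ℕ) :
    Ideal.Quotient.mk ((Iid A p) ^ n • ⊤ : Ideal A) ((rep p F n).coeff k) =
      if k < n then (PowerSeries.coeff k F).val n else 0 := by
  have h : (rep p F n).coeff k =
      if k < n then Function.surjInv Ideal.Quotient.mk_surjective
        ((PowerSeries.coeff k F).val n) else 0 := by
    rw [rep, Polynomial.finset_sum_coeff]
    simp only [Polynomial.coeff_C_mul, Polynomial.coeff_X_pow, mul_ite, mul_one, mul_zero]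
    rw [Finset.sum_ite_eq (Finset.range n) k]
    simp [Finset.mem_range]
  rw [h]
  split
  · exact Function.surjInv_eq _ _
  · simp

private theorem val_eq_mk_rep_coeff (F : PowerSeries (AdicCompletion (Iid A p) A)) {n k : ℕ}
    (hk : k < n) :
    (PowerSeries.coeff k F).val n =
      Ideal.Quotient.mk ((Iid A p) ^ n • ⊤ : Ideal A) ((rep p F n).coeff k) := by
  rw [rep_coeff, if_pos hk]

private theorem psi_compat (F : PowerSeries (AdicCompletion (Iid A p) A)) {m n : ℕ}
    (hmn : m ≤ n) :
    AdicCompletion.transitionMap (Jid A p) A[X] hmn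
      (Ideal.Quotient.mk ((Jid A p) ^ n • ⊤ : Ideal A[X]) (rep p F n)) =
      Ideal.Quotient.mk ((Jid A p) ^ m • ⊤ : Ideal A[X]) (rep p F m) := by
  rw [AdicCompletion.transitionMap_ideal_mk]
  refine mkJ_eq_mkJ p (fun k hk => ?_)
  refine diff_mem p ?_
  have h1 : Ideal.Quotient.mk ((Iid A p) ^ m • ⊤ : Ideal A) ((rep p F n).coeff k) =
      (PowerSeries.coeff k F).val m := by
    rw [← AdicCompletion.transitionMap_ideal_mk (Iid A p) hmn,
      ← val_eq_mk_rep_coeff p F (lt_of_lt_of_le hk hmn)]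
    exact (PowerSeries.coeff k F).property hmn
  rw [h1, val_eq_mk_rep_coeff p F hk]

/-- The ring homomorphism from power series over the completion to the adic completion. -/
private noncomputable def psi :
    PowerSeries (AdicCompletion (Iid A p) A) →+* AdicCompletion (Jid A p) A[X] := by
  refine RingHom.mk'
    { toFun := fun F => ⟨fun n => Ideal.Quotient.mk ((Jid A p) ^ n • ⊤ : Ideal A[X]) (rep p F n),
        fun {m n} hmn => psi_compat p F hmn⟩
      map_one' := ?_
      map_mul' := ?_ } ?_
  · refine AdicCompletion.ext (fun n => ?_)
    show Ideal.Quotient.mk _ (rep p 1 n) = (1 : A[X] ⧸ ((Jid A p) ^ n • ⊤ : Ideal A[X]))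
    rw [← map_one (Ideal.Quotient.mk ((Jid A p) ^ n • ⊤ : Ideal A[X]))]
    refine mkJ_eq_mkJ p (fun k hk => ?_)
    refine diff_mem p ?_
    rw [rep_coeff, if_pos hk]
    simp only [PowerSeries.coeff_one, Polynomial.coeff_one]
    split_ifs
    · rw [map_one]
      rfl
    · rw [map_zero]
      rfl
  · intro F G
    refine AdicCompletion.ext (fun n => ?_)
    show Ideal.Quotient.mk _ (rep p (F * G) n) =
      Ideal.Quotient.mk ((Jid A p) ^ n • ⊤ : Ideal A[X]) (rep p F n) *
        Ideal.Quotient.mk ((Jid A p) ^ n • ⊤ : Ideal A[X]) (rep p G n)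
    rw [← map_mul]
    refine mkJ_eq_mkJ p (fun k hk => ?_)
    refine diff_mem p ?_
    rw [rep_coeff, if_pos hk, Polynomial.coeff_mul, map_sum]
    have hval : ((PowerSeries.coeff k) (F * G)).val n =
        ∑ ij ∈ Finset.HasAntidiagonal.antidiagonal k,
          ((PowerSeries.coeff ij.1 F).val n * (PowerSeries.coeff ij.2 G).val n) := by
      rw [PowerSeries.coeff_mul]
      exact (map_sum (AdicCompletion.eval (Iid A p) A n) _ _).trans
        (Finset.sum_congr rfl (fun ij _ => AdicCompletion.val_mul _ n _ _))
    rw [hval]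
    refine Finset.sum_congr rfl (fun ij hij => ?_)
    have hij' : ij.1 + ij.2 = k := Finset.HasAntidiagonal.mem_antidiagonal.mp hij
    rw [map_mul, val_eq_mk_rep_coeff p F (by omega), val_eq_mk_rep_coeff p G (by omega)]
  · intro F G
    refine AdicCompletion.ext (fun n => ?_)
    show Ideal.Quotient.mk _ (rep p (F + G) n) =
      Ideal.Quotient.mk ((Jid A p) ^ n • ⊤ : Ideal A[X]) (rep p F n) +
        Ideal.Quotient.mk ((Jid A p) ^ n • ⊤ : Ideal A[X]) (rep p G n)
    rw [← map_add]
    refine mkJ_eq_mkJ p (fun k hk => ?_)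
    refine diff_mem p ?_
    rw [rep_coeff, if_pos hk, coeff_add, map_add, map_add (Ideal.Quotient.mk ((Iid A p) ^ n • ⊤ : Ideal A)),
      ← val_eq_mk_rep_coeff p F hk, ← val_eq_mk_rep_coeff p G hk]
    rfl

private theorem psi_val (F : PowerSeries (AdicCompletion (Iid A p) A)) (n : ℕ) :
    (psi p F).val n = Ideal.Quotient.mk ((Jid A p) ^ n • ⊤ : Ideal A[X]) (rep p F n) :=
  rfl

private theorem psi_inj : Function.Injective (psi p (A := A)) := by
  rw [injective_iff_map_eq_zero]
  intro F hF
  have h : ∀ n, Ideal.Quotient.mk ((Jid A p) ^ n • ⊤ : Ideal A[X]) (rep p F n) = 0 :=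
    fun n => by rw [← psi_val, hF]; rfl
  refine PowerSeries.ext (fun k => ?_)
  rw [map_zero (PowerSeries.coeff (R := AdicCompletion (Iid A p) A) k)]
  refine AdicCompletion.ext (fun m => ?_)
  have hrep : rep p F (m + k + 1) ∈ Jid A p ^ (m + k + 1) := by
    have := Ideal.Quotient.eq_zero_iff_mem.mp (h (m + k + 1))
    rwa [smul_top_eq] at this
  have hc : (rep p F (m + k + 1)).coeff k ∈ Iid A p ^ m := by
    have := coeff_mem_of_mem_pow p hrep k
    exact Ideal.pow_le_pow_right (by omega) this
  have h1 : (PowerSeries.coeff k F).val m =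
      Ideal.Quotient.mk ((Iid A p) ^ m • ⊤ : Ideal A) ((rep p F (m + k + 1)).coeff k) := by
    have hle : m ≤ m + k + 1 := by omega
    rw [← (PowerSeries.coeff k F).property hle,
      val_eq_mk_rep_coeff p F (show k < m + k + 1 by omega)]
    exact AdicCompletion.transitionMap_ideal_mk _ hle _
  rw [h1]
  exact Ideal.Quotient.eq_zero_iff_mem.mpr (by rw [smul_top_eq]; exact hc)

private theorem psi_surj : Function.Surjective (psi p (A := A)) := by
  intro x
  let g : ℕ → A[X] := fun N => Function.surjInv Ideal.Quotient.mk_surjective (x.val N)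
  have hg : ∀ N, Ideal.Quotient.mk ((Jid A p) ^ N • ⊤ : Ideal A[X]) (g N) = x.val N :=
    fun N => Function.surjInv_eq _ _
  have hgg : ∀ {M N : ℕ}, M ≤ N → g N - g M ∈ Jid A p ^ M := by
    intro M N hMN
    have h1 : Ideal.Quotient.mk ((Jid A p) ^ M • ⊤ : Ideal A[X]) (g N) =
        Ideal.Quotient.mk ((Jid A p) ^ M • ⊤ : Ideal A[X]) (g M) := by
      rw [hg M, ← x.property hMN, ← hg N]
      exact (AdicCompletion.transitionMap_ideal_mk _ hMN _)
    rw [Ideal.Quotient.eq, smul_top_eq] at h1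
    exact h1
  let c : ℕ → AdicCompletion (Iid A p) A := fun k =>
    ⟨fun m => Ideal.Quotient.mk ((Iid A p) ^ m • ⊤ : Ideal A) ((g (m + k + 1)).coeff k),
      by
        intro m m' hmm'
        rw [AdicCompletion.transitionMap_ideal_mk]
        rw [Ideal.Quotient.eq, smul_top_eq, ← coeff_sub]
        have h2 : g (m' + k + 1) - g (m + k + 1) ∈ Jid A p ^ (m + k + 1) :=
          hgg (by omega)
        have := coeff_mem_of_mem_pow p h2 k
        exact Ideal.pow_le_pow_right (by omega) this⟩
  refine ⟨PowerSeries.mk c, ?_⟩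
  refine AdicCompletion.ext (fun n => ?_)
  rw [psi_val, ← hg n]
  refine mkJ_eq_mkJ p (fun k hk => ?_)
  have key : (rep p (PowerSeries.mk c) n).coeff k - (g n).coeff k =
      ((rep p (PowerSeries.mk c) n).coeff k - (g (n + k + 1)).coeff k) +
        ((g (n + k + 1)).coeff k - (g n).coeff k) := by ring
  rw [key]
  refine Submodule.add_mem _ ?_ ?_
  · refine diff_mem p ?_
    rw [← val_eq_mk_rep_coeff p (PowerSeries.mk c) hk, PowerSeries.coeff_mk]
  · rw [← coeff_sub]
    exact coeff_mem_of_mem_pow p (hgg (show n ≤ n + k + 1 by omega)) k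

private theorem psi_algebraMap (f : A[X]) :
    psi p (PowerSeries.map (algebraMap A (AdicCompletion (Iid A p) A)) (f : PowerSeries A)) =
      algebraMap A[X] (AdicCompletion (Jid A p) A[X]) f := by
  refine AdicCompletion.ext (fun n => ?_)
  rw [psi_val]
  have halg : (algebraMap A[X] (AdicCompletion (Jid A p) A[X]) f).val n =
      Ideal.Quotient.mk ((Jid A p) ^ n • ⊤ : Ideal A[X]) f := by
    show algebraMap A[X] (A[X] ⧸ ((Jid A p) ^ n • ⊤ : Ideal A[X])) f = _
    rw [Ideal.Quotient.algebraMap_eq]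
  rw [halg]
  refine mkJ_eq_mkJ p (fun k hk => ?_)
  refine diff_mem p ?_
  rw [rep_coeff, if_pos hk, PowerSeries.coeff_map, Polynomial.coeff_coe]
  show (algebraMap A (AdicCompletion (Iid A p) A) (f.coeff k)).val n = _
  show algebraMap A (A ⧸ ((Iid A p) ^ n • ⊤ : Ideal A)) (f.coeff k) = _
  rw [Ideal.Quotient.algebraMap_eq]

end AdicPolyPS

/-- The `(p,X)`-adic completion of `A[X]` (the inverse limit of the `A[X]/(p,X)^n`) is
ring-isomorphic to the power series ring over the `p`-adic completion of `A`, compatibly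
with the canonical maps from `A[X]` to both sides. -/
theorem adicCompletion_polynomial_span_p_X_ringEquiv_powerSeries
    {A : Type*} [CommRing A] (p : ℕ) (hp : p.Prime) :
    ∃ e : AdicCompletion (Ideal.span ({(p : A[X]), X} : Set A[X])) A[X] ≃+*
        PowerSeries (AdicCompletion (Ideal.span ({(p : A)} : Set A)) A),
      ∀ f : A[X],
        e (algebraMap A[X] (AdicCompletion (Ideal.span ({(p : A[X]), X} : Set A[X])) A[X]) f) =
          PowerSeries.map
            (algebraMap A (AdicCompletion (Ideal.span ({(p : A)} : Set A)) A))
            (f : PowerSeries A) := by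
  refine ⟨(RingEquiv.ofBijective (AdicPolyPS.psi p (A := A))
    ⟨AdicPolyPS.psi_inj p, AdicPolyPS.psi_surj p⟩).symm, fun f => ?_⟩
  rw [← AdicPolyPS.psi_algebraMap p f]
  exact (RingEquiv.ofBijective _ _).symm_apply_apply _
end

section
/- Let p be a prime number and R a commutative ring that is p-adically complete and separated, i.e. the natural map R → lim_n R/p^n R is bijective. Then: (a) for every n ≥ 1 the inclusion of the polynomial ring R[X] into the power series ring R⟦X⟧ induces a ring isomorphism R[X]/((X+p)^n) ≅ R⟦X⟧/((X+p)^n); and (b) R⟦X⟧ is (X+p)-adically complete and separated, i.e. the natural map R⟦X⟧ → lim_n R⟦X⟧/((X+p)^n) is bijective. Equivalently, R⟦X⟧, with its natural map from R[X], is the (X+p)-adic completion of R[X]. -/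
namespace PadicPSAux

open PowerSeries

variable {R : Type*} [CommRing R] (π : R)

lemma smul_top_ideal (I : Ideal R) : (I • ⊤ : Submodule R R) = I := by
  rw [smul_eq_mul, Ideal.mul_top]

lemma mem_span_pow {x : R} {n : ℕ} : x ∈ (Ideal.span {π}) ^ n ↔ π ^ n ∣ x := by
  rw [Ideal.span_singleton_pow, Ideal.mem_span_singleton]

lemma haus' (hH : IsHausdorff (Ideal.span {π}) R) {x : R}
    (h : ∀ n, x ∈ (Ideal.span {π}) ^ n) : x = 0 := by
  refine hH.haus x fun n => SModEq.zero.mpr ?_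
  rw [smul_top_ideal]; exact h n

lemma prec' (hP : IsPrecomplete (Ideal.span {π}) R) (s : ℕ → R)
    (hs : ∀ m n, m ≤ n → s n - s m ∈ (Ideal.span {π}) ^ m) :
    ∃ L, ∀ n, L - s n ∈ (Ideal.span {π}) ^ n := by
  obtain ⟨L, hL⟩ := hP.prec (f := s) (by
    intro m n h
    rw [SModEq.sub_mem, smul_top_ideal]
    simpa using (Ideal.span {π} ^ m).neg_mem (hs m n h))
  refine ⟨L, fun n => ?_⟩
  have := (SModEq.sub_mem).mp (hL n)
  rw [smul_top_ideal] at this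
  simpa using (Ideal.span {π} ^ n).neg_mem this

lemma mul_mem_pow {x y : R} {a b c : ℕ} (hx : x ∈ (Ideal.span {π}) ^ a)
    (hy : y ∈ (Ideal.span {π}) ^ b) (h : c ≤ a + b) : x * y ∈ (Ideal.span {π}) ^ c :=
  Ideal.pow_le_pow_right h (by rw [pow_add]; exact Ideal.mul_mem_mul hx hy)

lemma neg_pow_mem (i : ℕ) : (-π) ^ i ∈ (Ideal.span {π}) ^ i :=
  (mem_span_pow π).mpr ⟨(-1) ^ i, by ring⟩

lemma pi_mem_pow_one : π ∈ (Ideal.span {π}) ^ 1 := by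
  rw [pow_one]; exact Ideal.mem_span_singleton_self π

/-- Division with remainder by `X + π` in `R⟦X⟧`, for `R` `π`-adically complete. -/
lemma div_X_add (hH : IsHausdorff (Ideal.span {π}) R) (hP : IsPrecomplete (Ideal.span {π}) R)
    (f : PowerSeries R) :
    ∃ (q : PowerSeries R) (c : R), f = q * (X + C π) + C c := by
  set I := Ideal.span {π} with hI
  set s : ℕ → ℕ → R := fun k m => ∑ j ∈ Finset.range m, (-π) ^ j * coeff (k + j) f with hs
  have hcauchy : ∀ k m n, m ≤ n → s k n - s k m ∈ I ^ m := by
    intro k m n h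
    simp only [hs]
    rw [← Finset.sum_Ico_eq_sub _ h]
    refine Ideal.sum_mem _ fun j hj => ?_
    refine Ideal.pow_le_pow_right (Finset.mem_Ico.mp hj).1 ?_
    exact (mem_span_pow π).mpr ⟨(-1) ^ j * coeff (k + j) f, by ring⟩
  choose L hL using fun k => prec' π hP (s k) (hcauchy k)
  have hrec : ∀ k n, s k (n + 1) = coeff k f - π * s (k + 1) n := by
    intro k n
    simp only [hs]
    rw [Finset.sum_range_succ']
    have h1 : ∀ j, (-π) ^ (j + 1) * coeff (k + (j + 1)) f
        = -(π * ((-π) ^ j * coeff (k + 1 + j) f)) := by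
      intro j; rw [show k + (j + 1) = k + 1 + j by omega]; ring
    rw [Finset.sum_congr rfl fun j _ => h1 j]
    rw [Finset.sum_neg_distrib, Finset.mul_sum]
    simp; ring
  have hkey : ∀ k, coeff k f = L k + π * L (k + 1) := by
    intro k
    have hmem : ∀ n, L k + π * L (k + 1) - coeff k f ∈ I ^ n := by
      intro n
      have h1 : L k - s k (n + 1) ∈ I ^ (n + 1) := hL k (n + 1)
      have h2 : L (k + 1) - s (k + 1) n ∈ I ^ n := hL (k + 1) n
      have heq : L k + π * L (k + 1) - coeff k f
          = (L k - s k (n + 1)) + π * (L (k + 1) - s (k + 1) n) := by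
        rw [hrec k n]; ring
      rw [heq]
      exact Ideal.add_mem _ (Ideal.pow_le_pow_right (by omega) h1)
        (Ideal.mul_mem_left _ π h2)
    have := haus' π hH hmem
    exact (sub_eq_zero.mp this).symm
  refine ⟨PowerSeries.mk fun k => L (k + 1), L 0, ?_⟩
  ext k
  rcases k with _ | k
  · simp only [map_add, coeff_zero_eq_constantCoeff_apply, map_mul, constantCoeff_X,
      constantCoeff_C, constantCoeff_mk]
    have := hkey 0
    simp only [coeff_zero_eq_constantCoeff_apply] at this
    rw [this]; ring
  · rw [map_add, mul_add, map_add, coeff_succ_mul_X, coeff_mul_C, coeff_C]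
    simp only [coeff_mk, if_neg (Nat.succ_ne_zero k)]
    rw [hkey (k + 1)]
    ring

/-- Coefficient recursion for division by `X + π`. -/
lemma div_coeff_rec (q w : PowerSeries R) (c : R) (h : w = q * (X + C π) + C c)
    (j M : ℕ) :
    coeff j q = (∑ i ∈ Finset.range M, (-π) ^ i * coeff (j + 1 + i) w)
      + (-π) ^ M * coeff (j + M) q := by
  induction M with
  | zero => simp
  | succ M ih =>
    have hw : coeff (j + M + 1) w = coeff (j + M) q + π * coeff (j + M + 1) q := by
      rw [h, map_add, mul_add, map_add, coeff_succ_mul_X, coeff_mul_C, coeff_C,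
        if_neg (Nat.succ_ne_zero _)]
      ring
    rw [ih, Finset.sum_range_succ]
    have h2 : coeff (j + M) q = coeff (j + M + 1) w - π * coeff (j + M + 1) q := by
      rw [hw]; ring
    rw [h2, show j + 1 + M = j + M + 1 from by omega, show j + (M + 1) = j + M + 1 from by omega]
    ring

/-- Uniqueness of division by `X + π`. -/
lemma unique_div (hH : IsHausdorff (Ideal.span {π}) R) (q : PowerSeries R) (c : R)
    (h : q * (X + C π) + C c = 0) : q = 0 ∧ c = 0 := by
  have hq : q = 0 := by
    ext j
    refine haus' π hH fun M => ?_
    have := div_coeff_rec π q 0 c h.symm j M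
    simp only [map_zero, zero_mul, mul_zero, Finset.sum_const_zero, zero_add] at this
    rw [this]
    exact Ideal.mul_mem_right _ _ (neg_pow_mem π M)
  refine ⟨hq, ?_⟩
  have := congrArg (coeff (R := R) 0) h
  rw [hq] at this
  simpa using this

/-- Smallness of quotient and remainder for division by `X + π`. -/
lemma small_div {m : ℕ} {w q : PowerSeries R} {c : R}
    (hw : ∀ k, coeff k w ∈ (Ideal.span {π}) ^ (m - k))
    (h : w = q * (X + C π) + C c) :
    (∀ k, coeff k q ∈ (Ideal.span {π}) ^ (m - 1 - k)) ∧ c ∈ (Ideal.span {π}) ^ m := by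
  have hq : ∀ k, coeff k q ∈ (Ideal.span {π}) ^ (m - 1 - k) := by
    intro j
    rw [div_coeff_rec π q w c h j m]
    refine Ideal.add_mem _ (Ideal.sum_mem _ fun i _ => ?_) ?_
    · exact mul_mem_pow π (neg_pow_mem π i) (hw (j + 1 + i)) (by omega)
    · exact Ideal.pow_le_pow_right (by omega)
        (Ideal.mul_mem_right _ _ (neg_pow_mem π m))
  refine ⟨hq, ?_⟩
  have h0 : c = coeff 0 w - π * coeff 0 q := by
    rw [h]
    simp only [map_add, coeff_zero_eq_constantCoeff_apply, map_mul, constantCoeff_X,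
      constantCoeff_C]
    ring
  rw [h0]
  refine Ideal.sub_mem _ (by simpa using hw 0) ?_
  exact mul_mem_pow π (pi_mem_pow_one π) (hq 0) (by omega)

/-- coefficients of `(X+π)^n * u` lie in `(π)^(n-k)`. -/
lemma coeff_pow_mul (n k : ℕ) (u : PowerSeries R) :
    coeff k ((X + C π) ^ n * u) ∈ (Ideal.span {π}) ^ (n - k) := by
  induction n generalizing k u with
  | zero => simp
  | succ n ih =>
    have h : (X + C π) ^ (n + 1) * u
        = X * ((X + C π) ^ n * u) + C π * ((X + C π) ^ n * u) := by ring
    rw [h, map_add, coeff_C_mul]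
    rcases k with _ | k
    · rw [coeff_zero_X_mul, zero_add]
      exact mul_mem_pow π (pi_mem_pow_one π) (ih 0 u) (by omega)
    · rw [coeff_succ_X_mul]
      refine Ideal.add_mem _ ?_ ?_
      · exact Ideal.pow_le_pow_right (by omega) (ih k u)
      · exact mul_mem_pow π (pi_mem_pow_one π) (ih (k + 1) u) (by omega)

/-- Existence of division by `(X+π)^n` with polynomial remainder. -/
lemma div_pow [Nontrivial R] (hH : IsHausdorff (Ideal.span {π}) R) (hP : IsPrecomplete (Ideal.span {π}) R)
    (n : ℕ) (f : PowerSeries R) :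
    ∃ (q : PowerSeries R) (r : Polynomial R), r.degree < n ∧
      f = q * (X + C π) ^ n + (r : PowerSeries R) := by
  induction n with
  | zero =>
    exact ⟨f, 0, by simpa using WithBot.bot_lt_coe 0, by simp⟩
  | succ n ih =>
    obtain ⟨q₁, r₁, hdeg, heq⟩ := ih
    obtain ⟨q₂, c, hq⟩ := div_X_add π hH hP q₁
    refine ⟨q₂, Polynomial.C c * (Polynomial.X + Polynomial.C π) ^ n + r₁, ?_, ?_⟩
    · rw [Polynomial.degree_lt_iff_coeff_zero]
      intro m hm
      have hmn : n < m := by omega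
      rw [Polynomial.coeff_add, Polynomial.coeff_C_mul]
      have h1 : ((Polynomial.X + Polynomial.C π) ^ n).coeff m = 0 := by
        refine Polynomial.coeff_eq_zero_of_natDegree_lt ?_
        rw [(Polynomial.monic_X_add_C π).natDegree_pow, Polynomial.natDegree_X_add_C, mul_one]
        exact hmn
      have h2 : r₁.coeff m = 0 := by
        refine Polynomial.coeff_eq_zero_of_degree_lt (lt_of_lt_of_le hdeg ?_)
        exact_mod_cast le_of_lt hmn
      rw [h1, h2, mul_zero, add_zero]
    · push_cast
      rw [heq, hq]
      ring

/-- Uniqueness of division by `(X+π)^n` with polynomial remainder. -/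
lemma unique_pow [Nontrivial R] (hH : IsHausdorff (Ideal.span {π}) R) :
    ∀ (n : ℕ) (q : PowerSeries R) (r : Polynomial R), r.degree < n →
      q * (X + C π) ^ n + (r : PowerSeries R) = 0 → q = 0 ∧ r = 0 := by
  intro n
  induction n with
  | zero =>
    intro q r hdeg h
    have hr : r = 0 := Polynomial.degree_eq_bot.mp (Nat.WithBot.lt_zero_iff.mp
      (by exact_mod_cast hdeg))
    rw [hr] at h ⊢
    simp only [Polynomial.coe_zero, pow_zero, mul_one, add_zero] at h
    exact ⟨h, rfl⟩
  | succ n ih =>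
    intro q r hdeg h
    have hmonic := Polynomial.monic_X_add_C π
    set d := r /ₘ (Polynomial.X + Polynomial.C π) with hd
    set e := r %ₘ (Polynomial.X + Polynomial.C π) with he
    have hre : e + (Polynomial.X + Polynomial.C π) * d = r :=
      Polynomial.modByMonic_add_div r _
    have hedeg : e.degree ≤ 0 := by
      have := Polynomial.degree_modByMonic_lt r hmonic
      rw [Polynomial.degree_X_add_C] at this
      exact Nat.WithBot.lt_one_iff_le_zero.mp this
    have heC : e = Polynomial.C (e.coeff 0) := Polynomial.eq_C_of_degree_le_zero hedeg
    have hddeg : d.degree < n := by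
      rcases eq_or_ne d 0 with h0 | h0
      · rw [h0, Polynomial.degree_zero]; exact WithBot.bot_lt_coe n
      · have h1 : ((Polynomial.X + Polynomial.C π) * d).degree = d.degree + 1 := by
          rw [mul_comm, hmonic.degree_mul, Polynomial.degree_X_add_C]
        have h2 : ((Polynomial.X + Polynomial.C π) * d).degree < (n : WithBot ℕ) + 1 := by
          have h3 : ((Polynomial.X + Polynomial.C π) * d) = r - e := by
            rw [← hre]; ring
          rw [h3]
          refine lt_of_le_of_lt (Polynomial.degree_sub_le r e) (max_lt ?_ ?_)
          · exact_mod_cast hdeg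
          · refine lt_of_le_of_lt hedeg ?_
            exact_mod_cast WithBot.coe_lt_coe.mpr (Nat.succ_pos n)
        rw [h1] at h2
        exact (WithBot.add_lt_add_iff_right (by simp : (1 : WithBot ℕ) ≠ ⊥)).mp h2
    have hsplit : (q * (X + C π) ^ n + (d : PowerSeries R)) * (X + C π)
        + C (e.coeff 0) = 0 := by
      rw [← h]
      rw [← hre]
      have hec : (e : PowerSeries R) = C (e.coeff 0) := by
        conv_lhs => rw [heC]
        exact Polynomial.coe_C _
      push_cast
      rw [hec]
      ring
    obtain ⟨h4, h5⟩ := unique_div π hH _ _ hsplit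
    obtain ⟨h6, h7⟩ := ih q d hddeg h4
    refine ⟨h6, ?_⟩
    rw [← hre, h7, heC, h5]
    simp


/-- Smallness of remainder for division by `(X+π)^n`. -/
lemma small_rem [Nontrivial R] :
    ∀ (n m : ℕ) (w q : PowerSeries R) (r : Polynomial R),
      (∀ k, coeff k w ∈ (Ideal.span {π}) ^ (m - k)) → r.degree < n →
      w = q * (X + C π) ^ n + (r : PowerSeries R) →
      ∀ k, r.coeff k ∈ (Ideal.span {π}) ^ (m - k) := by
  intro n
  induction n with
  | zero =>
    intro m w q r _ hdeg _ k
    have hr : r = 0 := Polynomial.degree_eq_bot.mp (Nat.WithBot.lt_zero_iff.mp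
      (by exact_mod_cast hdeg))
    simp [hr]
  | succ n ih =>
    intro m w q r hw hdeg h
    have hmonic := Polynomial.monic_X_add_C π
    set d := r /ₘ (Polynomial.X + Polynomial.C π) with hd
    set e := r %ₘ (Polynomial.X + Polynomial.C π) with he
    have hre : e + (Polynomial.X + Polynomial.C π) * d = r :=
      Polynomial.modByMonic_add_div r _
    have hedeg : e.degree ≤ 0 := by
      have := Polynomial.degree_modByMonic_lt r hmonic
      rw [Polynomial.degree_X_add_C] at this
      exact Nat.WithBot.lt_one_iff_le_zero.mp this
    have heC : e = Polynomial.C (e.coeff 0) := Polynomial.eq_C_of_degree_le_zero hedeg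
    have hddeg : d.degree < n := by
      rcases eq_or_ne d 0 with h0 | h0
      · rw [h0, Polynomial.degree_zero]; exact WithBot.bot_lt_coe n
      · have h1 : ((Polynomial.X + Polynomial.C π) * d).degree = d.degree + 1 := by
          rw [mul_comm, hmonic.degree_mul, Polynomial.degree_X_add_C]
        have h2 : ((Polynomial.X + Polynomial.C π) * d).degree < (n : WithBot ℕ) + 1 := by
          have h3 : ((Polynomial.X + Polynomial.C π) * d) = r - e := by
            rw [← hre]; ring
          rw [h3]
          refine lt_of_le_of_lt (Polynomial.degree_sub_le r e) (max_lt ?_ ?_)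
          · exact_mod_cast hdeg
          · refine lt_of_le_of_lt hedeg ?_
            exact_mod_cast WithBot.coe_lt_coe.mpr (Nat.succ_pos n)
        rw [h1] at h2
        exact (WithBot.add_lt_add_iff_right (by simp : (1 : WithBot ℕ) ≠ ⊥)).mp h2
    have hec : (e : PowerSeries R) = C (e.coeff 0) := by
      conv_lhs => rw [heC]
      exact Polynomial.coe_C _
    have hsplit : w = (q * (X + C π) ^ n + (d : PowerSeries R)) * (X + C π)
        + C (e.coeff 0) := by
      rw [h, ← hre]
      push_cast
      rw [hec]
      ring
    obtain ⟨hq', hc⟩ := small_div π hw hsplit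
    have hd' : ∀ k, d.coeff k ∈ (Ideal.span {π}) ^ (m - 1 - k) :=
      ih (m - 1) _ q d hq' hddeg rfl
    intro k
    rw [← hre]
    have hcoeff : (e + (Polynomial.X + Polynomial.C π) * d).coeff k
        = e.coeff k + ((Polynomial.X * d).coeff k + π * d.coeff k) := by
      rw [Polynomial.coeff_add, add_mul, Polynomial.coeff_add, Polynomial.coeff_C_mul]
    rw [hcoeff]
    rcases k with _ | k
    · rw [Polynomial.mul_coeff_zero, Polynomial.coeff_X_zero, zero_mul]
      refine Ideal.add_mem _ (by simpa using hc) ?_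
      rw [zero_add]
      exact mul_mem_pow π (pi_mem_pow_one π) (hd' 0) (by omega)
    · have he0 : e.coeff (k + 1) = 0 := by
        rw [heC, Polynomial.coeff_C, if_neg (Nat.succ_ne_zero k)]
      rw [he0, Polynomial.coeff_X_mul, zero_add]
      refine Ideal.add_mem _ ?_ ?_
      · exact Ideal.pow_le_pow_right (by omega) (hd' k)
      · exact mul_mem_pow π (pi_mem_pow_one π) (hd' (k + 1)) (by omega)

/-- The ideal `((X+π)^n)` is closed under coefficientwise `π`-adic limits. -/
lemma mem_span_of_approx [Nontrivial R] (hH : IsHausdorff (Ideal.span {π}) R)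
    (hP : IsPrecomplete (Ideal.span {π}) R) (n : ℕ) (h : PowerSeries R)
    (H : ∀ m, ∃ u : PowerSeries R,
      ∀ k, coeff k (h - (X + C π) ^ n * u) ∈ (Ideal.span {π}) ^ (m - k)) :
    ∃ v, h = (X + C π) ^ n * v := by
  obtain ⟨q, r, hdeg, heq⟩ := div_pow π hH hP n h
  have hr : r = 0 := by
    have hco : ∀ m k, r.coeff k ∈ (Ideal.span {π}) ^ (m - k) := by
      intro m
      obtain ⟨u, hu⟩ := H m
      have heq2 : h - (X + C π) ^ n * u = (q - u) * (X + C π) ^ n + (r : PowerSeries R) := by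
        rw [heq]; ring
      exact small_rem π n m _ (q - u) r hu hdeg heq2
    ext k
    rw [Polynomial.coeff_zero]
    refine haus' π hH fun j => ?_
    have := hco (j + k) k
    rwa [show j + k - k = j from by omega] at this
  refine ⟨q, ?_⟩
  rw [heq, hr]
  push_cast
  ring

/-- Polynomials divisible by `(X+π)^n` as power series are divisible as polynomials. -/
lemma poly_dvd [Nontrivial R] (hH : IsHausdorff (Ideal.span {π}) R) (n : ℕ) (g : Polynomial R)
    (hg : ∃ u, (g : PowerSeries R) = (X + C π) ^ n * u) :
    ∃ a : Polynomial R, g = (Polynomial.X + Polynomial.C π) ^ n * a := by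
  obtain ⟨u, hu⟩ := hg
  have hmonic : ((Polynomial.X + Polynomial.C π) ^ n).Monic :=
    (Polynomial.monic_X_add_C π).pow n
  set a := g /ₘ ((Polynomial.X + Polynomial.C π) ^ n) with ha
  set b := g %ₘ ((Polynomial.X + Polynomial.C π) ^ n) with hb
  have hgb : b + (Polynomial.X + Polynomial.C π) ^ n * a = g :=
    Polynomial.modByMonic_add_div g _
  have hbdeg : b.degree < n := by
    have h1 := Polynomial.degree_modByMonic_lt g hmonic
    have h2 : ((Polynomial.X + Polynomial.C π) ^ n).degree = (n : WithBot ℕ) := by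
      rw [Polynomial.degree_eq_natDegree hmonic.ne_zero,
        (Polynomial.monic_X_add_C π).natDegree_pow, Polynomial.natDegree_X_add_C, mul_one]
    rwa [h2] at h1
  have hzero : ((a : PowerSeries R) - u) * (X + C π) ^ n + (b : PowerSeries R) = 0 := by
    have : (g : PowerSeries R) = (b : PowerSeries R)
        + (X + C π) ^ n * (a : PowerSeries R) := by
      rw [← hgb]; push_cast; ring
    rw [this] at hu
    linear_combination hu
  obtain ⟨_, hb0⟩ := unique_pow π hH n _ b hbdeg hzero
  exact ⟨a, by rw [← hgb, hb0, zero_add]⟩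

end PadicPSAux

/-- For a `p`-adically complete and separated commutative ring `R`:
(a) for every `n ≥ 1`, the inclusion `R[X] → R⟦X⟧` induces a ring isomorphism
`R[X]/((X+p)^n) ≅ R⟦X⟧/((X+p)^n)`, and
(b) `R⟦X⟧` is `(X+p)`-adically complete and separated. -/
theorem powerSeries_isAdicComplete_X_add_p
    {R : Type*} [CommRing R] (p : ℕ) (hp : p.Prime)
    (hR : IsAdicComplete (Ideal.span ({(p : R)} : Set R)) R) :
    (∀ n : ℕ, 1 ≤ n →
      ∃ e : (Polynomial R ⧸
              Ideal.span ({(Polynomial.X + (p : Polynomial R)) ^ n} : Set (Polynomial R))) ≃+*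
            (PowerSeries R ⧸
              Ideal.span ({(PowerSeries.X + (p : PowerSeries R)) ^ n} : Set (PowerSeries R))),
        ∀ f : Polynomial R,
          e (Ideal.Quotient.mk _ f) = Ideal.Quotient.mk _ (f : PowerSeries R)) ∧
    IsAdicComplete (Ideal.span ({PowerSeries.X + (p : PowerSeries R)} : Set (PowerSeries R)))
      (PowerSeries R) := by
  open PadicPSAux PowerSeries in
  have hH := hR.toIsHausdorff
  have hP := hR.toIsPrecomplete
  rcases subsingleton_or_nontrivial R with hsub | hnt
  · -- trivial ring
    haveI : Subsingleton (PowerSeries R) := ⟨fun a b => by ext k; exact Subsingleton.elim _ _⟩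
    haveI : Subsingleton (Polynomial R) := ⟨fun a b => Polynomial.ext fun k => Subsingleton.elim _ _⟩
    constructor
    · intro n _
      haveI : Subsingleton (PowerSeries R ⧸
          Ideal.span ({(PowerSeries.X + (p : PowerSeries R)) ^ n} : Set (PowerSeries R))) := by
        constructor; intro a b
        obtain ⟨x, rfl⟩ := Ideal.Quotient.mk_surjective a
        obtain ⟨y, rfl⟩ := Ideal.Quotient.mk_surjective b
        rw [Subsingleton.elim x y]
      haveI : Subsingleton (Polynomial R ⧸
          Ideal.span ({(Polynomial.X + (p : Polynomial R)) ^ n} : Set (Polynomial R))) := by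
        constructor; intro a b
        obtain ⟨x, rfl⟩ := Ideal.Quotient.mk_surjective a
        obtain ⟨y, rfl⟩ := Ideal.Quotient.mk_surjective b
        rw [Subsingleton.elim x y]
      exact ⟨RingEquiv.ofBijective (Ideal.Quotient.lift _
        ((Ideal.Quotient.mk _).comp Polynomial.coeToPowerSeries.ringHom)
        (fun a _ => Subsingleton.elim _ _)) ⟨fun a b _ => Subsingleton.elim a b,
          fun y => ⟨0, Subsingleton.elim _ _⟩⟩, fun f => Subsingleton.elim _ _⟩
    · infer_instance
  · -- nontrivial ring
    set π : R := (p : R) with hπ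
    have hcast : ((p : ℕ) : PowerSeries R) = PowerSeries.C π :=
      (map_natCast (PowerSeries.C (R := R)) p).symm
    have hcastP : ((p : ℕ) : Polynomial R) = Polynomial.C π :=
      (Polynomial.C_eq_natCast p).symm
    constructor
    · -- part (a)
      intro n _
      rw [hcastP, hcast]
      have hcoe : (((Polynomial.X + Polynomial.C π) ^ n : Polynomial R) : PowerSeries R)
          = (X + C π) ^ n := by
        rw [Polynomial.coe_pow, Polynomial.coe_add, Polynomial.coe_X, Polynomial.coe_C]
      have hker : ∀ a ∈ Ideal.span {(Polynomial.X + Polynomial.C π) ^ n},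
          ((Ideal.Quotient.mk (Ideal.span {(X + C π) ^ n})).comp
            Polynomial.coeToPowerSeries.ringHom) a = 0 := by
        intro a ha
        obtain ⟨b, rfl⟩ := Ideal.mem_span_singleton.mp ha
        rw [RingHom.comp_apply, Ideal.Quotient.eq_zero_iff_mem,
          Polynomial.coeToPowerSeries.ringHom_apply, Polynomial.coe_mul, hcoe]
        exact Ideal.mem_span_singleton.mpr ⟨(b : PowerSeries R), rfl⟩
      set φ := Ideal.Quotient.lift _ _ hker with hφ
      have hφmk : ∀ g : Polynomial R,
          φ (Ideal.Quotient.mk _ g) = Ideal.Quotient.mk _ (g : PowerSeries R) := by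
        intro g
        rw [hφ, Ideal.Quotient.lift_mk, RingHom.comp_apply,
          Polynomial.coeToPowerSeries.ringHom_apply]
      have hinj : Function.Injective φ := by
        intro x y hxy
        obtain ⟨g1, rfl⟩ := Ideal.Quotient.mk_surjective x
        obtain ⟨g2, rfl⟩ := Ideal.Quotient.mk_surjective y
        rw [hφmk, hφmk, Ideal.Quotient.eq] at hxy
        rw [Ideal.Quotient.eq]
        obtain ⟨u, hu⟩ := Ideal.mem_span_singleton.mp hxy
        obtain ⟨a, ha⟩ := poly_dvd π hH n (g1 - g2)
          ⟨u, by rw [Polynomial.coe_sub]; exact hu⟩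
        exact Ideal.mem_span_singleton.mpr ⟨a, ha⟩
      have hsurj : Function.Surjective φ := by
        intro y
        obtain ⟨f, rfl⟩ := Ideal.Quotient.mk_surjective y
        obtain ⟨q, r, hdeg, heq⟩ := div_pow π hH hP n f
        refine ⟨Ideal.Quotient.mk _ r, ?_⟩
        rw [hφmk, Ideal.Quotient.eq, heq]
        exact Ideal.mem_span_singleton.mpr ⟨-q, by ring⟩
      refine ⟨RingEquiv.ofBijective φ ⟨hinj, hsurj⟩, fun f => ?_⟩
      exact hφmk f
    · -- part (b)
      rw [hcast]
      haveI hHps : IsHausdorff (Ideal.span {X + C π}) (PowerSeries R) := by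
        constructor
        intro x hx
        ext k
        rw [map_zero]
        refine haus' π hH fun j => ?_
        have hmem := SModEq.zero.mp (hx (j + k))
        rw [smul_top_ideal, Ideal.span_singleton_pow] at hmem
        obtain ⟨u, hu⟩ := Ideal.mem_span_singleton.mp hmem
        rw [hu]
        have h2 := coeff_pow_mul π (j + k) k u
        rwa [show j + k - k = j from by omega] at h2
      haveI hPps : IsPrecomplete (Ideal.span {X + C π}) (PowerSeries R) := by
        constructor
        intro f hf
        choose q r hdeg heq using fun n => div_pow π hH hP n (f n)
        have hcompat : ∀ m n : ℕ, m ≤ n → ∃ u,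
            ((r n : PowerSeries R) - (r m : PowerSeries R)) = (X + C π) ^ m * u := by
          intro m n hmn
          have h1 := SModEq.sub_mem.mp (hf hmn)
          rw [smul_top_ideal, Ideal.span_singleton_pow] at h1
          obtain ⟨u0, hu0⟩ := Ideal.mem_span_singleton.mp h1
          have hpow : (X + C π) ^ n = (X + C π) ^ m * (X + C π) ^ (n - m) := by
            rw [← pow_add, Nat.add_sub_cancel' hmn]
          have hrn : (r n : PowerSeries R) = f n - q n * (X + C π) ^ n := by
            rw [heq n]; ring
          have hrm : (r m : PowerSeries R) = f m - q m * (X + C π) ^ m := by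
            rw [heq m]; ring
          refine ⟨-u0 - q n * (X + C π) ^ (n - m) + q m, ?_⟩
          rw [hrn, hrm, hpow]
          linear_combination -hu0
        have hcauchy : ∀ k m n, m ≤ n →
            (r (n + k)).coeff k - (r (m + k)).coeff k ∈ (Ideal.span {π}) ^ m := by
          intro k m n hmn
          obtain ⟨u, hu⟩ := hcompat (m + k) (n + k) (by omega)
          have h2 : (r (n + k)).coeff k - (r (m + k)).coeff k
              = PowerSeries.coeff k
                ((r (n + k) : PowerSeries R) - (r (m + k) : PowerSeries R)) := by
            rw [map_sub, Polynomial.coeff_coe, Polynomial.coeff_coe]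
          rw [h2, hu]
          have h3 := coeff_pow_mul π (m + k) k u
          rwa [show m + k - k = m from by omega] at h3
        choose Lk hLk using fun k =>
          prec' π hP (fun j => (r (j + k)).coeff k) (fun m n hmn => hcauchy k m n hmn)
        set L := PowerSeries.mk Lk with hL
        have hLr : ∀ m k, PowerSeries.coeff k (L - (r m : PowerSeries R))
            ∈ (Ideal.span {π}) ^ (m - k) := by
          intro m k
          rcases le_or_gt k m with hkm | hkm
          · have h1 := hLk k (m - k)
            rw [show m - k + k = m from by omega] at h1
            have h2 : PowerSeries.coeff k (L - (r m : PowerSeries R))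
                = Lk k - (r m).coeff k := by
              rw [map_sub, hL, coeff_mk, Polynomial.coeff_coe]
            rw [h2]; exact h1
          · rw [show m - k = 0 from by omega, pow_zero, Ideal.one_eq_top]
            trivial
        have hclose : ∀ n, ∃ v,
            L - (r n : PowerSeries R) = (X + C π) ^ n * v := by
          intro n
          refine mem_span_of_approx π hH hP n _ fun m => ?_
          obtain ⟨u, hu⟩ := hcompat n (m + n) (by omega)
          refine ⟨u, fun k => ?_⟩
          have h3 : L - (r n : PowerSeries R) - (X + C π) ^ n * u
              = L - (r (m + n) : PowerSeries R) := by
            rw [← hu]; ring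
          rw [h3]
          exact Ideal.pow_le_pow_right (by omega) (hLr (m + n) k)
        refine ⟨L, fun n => ?_⟩
        rw [SModEq.sub_mem, smul_top_ideal, Ideal.span_singleton_pow]
        obtain ⟨v, hv⟩ := hclose n
        refine Ideal.mem_span_singleton.mpr ⟨q n - v, ?_⟩
        rw [heq n]
        linear_combination -hv
      exact IsAdicComplete.mk
end

section
/- Let p ≥ 2 and r ≥ 1 be integers, let d ≥ 0 be a real number, and set e = p^r − 1. Let β_0, …, β_{r−1} be real numbers such that for every j, either d+1 < β_j < p−d−1 or −p+d+1 < β_j < −d−1. Then there exists an integer m such that m + d/p < (∑_{j=0}^{r−1} β_j·p^j)/e < m + 1 − d/p. -/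
/-- Let `p ≥ 2`, `r ≥ 1`, `d ≥ 0`, `e = p^r - 1`, and let `β_0, …, β_{r-1}` be reals with
each `β_j` in `(d+1, p-d-1)` or in `(-p+d+1, -d-1)`.  Then `(∑ β_j p^j)/e` is `d`-generic:
there is an integer `m` with `m + d/p < (∑ β_j p^j)/e < m + 1 - d/p`. -/
theorem generic_of_deep_digits
    (p r : ℕ) (hp : 2 ≤ p) (hr : 1 ≤ r) (d : ℝ) (hd : 0 ≤ d)
    (β : Fin r → ℝ)
    (hβ : ∀ j : Fin r,
      (d + 1 < β j ∧ β j < (p : ℝ) - d - 1) ∨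
      (-(p : ℝ) + d + 1 < β j ∧ β j < -d - 1)) :
    ∃ m : ℤ,
      (m : ℝ) + d / p < (∑ j : Fin r, β j * (p : ℝ) ^ (j : ℕ)) / ((p : ℝ) ^ r - 1) ∧
      (∑ j : Fin r, β j * (p : ℝ) ^ (j : ℕ)) / ((p : ℝ) ^ r - 1) < (m : ℝ) + 1 - d / p := by
  classical
  obtain ⟨n, rfl⟩ : ∃ n, r = n + 1 := ⟨r - 1, (Nat.succ_pred_eq_of_pos hr).symm⟩
  have hp1 : (1 : ℝ) < p := by exact_mod_cast Nat.lt_of_lt_of_le Nat.one_lt_two hp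
  have hp0 : (0 : ℝ) < p := lt_trans zero_lt_one hp1
  -- carry digits
  set c : Fin (n + 1) → ℝ :=
    fun j => if d + 1 < β j ∧ β j < (p : ℝ) - d - 1 then 0 else 1 with hcdef
  have hc01 : ∀ j, 0 ≤ c j ∧ c j ≤ 1 := by
    intro j
    simp only [hcdef]
    split_ifs <;> norm_num
  have hγ : ∀ j, d + 1 < β j + c j * p ∧ β j + c j * p < (p : ℝ) - d - 1 := by
    intro j
    by_cases h : d + 1 < β j ∧ β j < (p : ℝ) - d - 1
    · simpa [hcdef, h] using h
    · have h2 := (hβ j).resolve_left h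
      simp only [hcdef, if_neg h, one_mul]
      constructor <;> linarith [h2.1, h2.2]
  set P : ℝ := ∑ j : Fin (n + 1), (p : ℝ) ^ (j : ℕ) with hPdef
  set S : ℝ := ∑ j : Fin (n + 1), β j * (p : ℝ) ^ (j : ℕ) with hSdef
  set G : ℝ := ∑ j : Fin (n + 1), (β j + c j * p) * (p : ℝ) ^ (j : ℕ) with hGdef
  set cl : ℝ := c (Fin.last n) with hcldef
  set D : ℝ := (∑ j : Fin n, c j.castSucc * (p : ℝ) ^ ((j : ℕ) + 1)) + cl with hDdef
  set e : ℝ := (p : ℝ) ^ (n + 1) - 1 with hedef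
  have hPpos : 0 < P := by
    apply Finset.sum_pos
    · intro i _; positivity
    · exact Finset.univ_nonempty
  have heP : ((p : ℝ) - 1) * P = e := by
    rw [hPdef, hedef, Fin.sum_univ_eq_sum_range (fun i => (p : ℝ) ^ i) (n + 1),
      mul_comm, geom_sum_mul]
  have he : 0 < e := by
    rw [← heP]
    have : (1 : ℝ) < (p : ℝ) ^ (n + 1) := one_lt_pow₀ hp1 (Nat.succ_ne_zero n)
    nlinarith
  -- key identity
  have hG : G = S + ∑ j : Fin (n + 1), c j * (p : ℝ) ^ ((j : ℕ) + 1) := by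
    rw [hGdef, hSdef, ← Finset.sum_add_distrib]
    apply Finset.sum_congr rfl
    intro j _
    rw [pow_succ]
    ring
  have hsplit : ∑ j : Fin (n + 1), c j * (p : ℝ) ^ ((j : ℕ) + 1)
      = (∑ j : Fin n, c j.castSucc * (p : ℝ) ^ ((j : ℕ) + 1)) + cl * (p : ℝ) ^ (n + 1) := by
    rw [Fin.sum_univ_castSucc]
    simp [Fin.val_last, hcldef]
  have hid : S + cl * e = G - D := by
    rw [hG, hsplit, hDdef, hedef]
    ring
  -- bounds on G
  have hGlb : (d + 1) * P < G := by
    rw [hPdef, hGdef, Finset.mul_sum]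
    apply Finset.sum_lt_sum_of_nonempty Finset.univ_nonempty
    intro j _
    have := (hγ j).1
    have hpow : (0 : ℝ) < (p : ℝ) ^ (j : ℕ) := by positivity
    exact mul_lt_mul_of_pos_right this hpow
  have hGub : G < ((p : ℝ) - d - 1) * P := by
    rw [hPdef, hGdef, Finset.mul_sum]
    apply Finset.sum_lt_sum_of_nonempty Finset.univ_nonempty
    intro j _
    have := (hγ j).2
    have hpow : (0 : ℝ) < (p : ℝ) ^ (j : ℕ) := by positivity
    exact mul_lt_mul_of_pos_right this hpow
  -- bounds on D
  have hD0 : 0 ≤ D := by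
    rw [hDdef]
    have h1 : 0 ≤ ∑ j : Fin n, c j.castSucc * (p : ℝ) ^ ((j : ℕ) + 1) := by
      apply Finset.sum_nonneg
      intro j _
      have := (hc01 j.castSucc).1
      positivity
    linarith [(hc01 (Fin.last n)).1]
  have hDP : D ≤ P := by
    have hPsucc : P = 1 + ∑ j : Fin n, (p : ℝ) ^ ((j : ℕ) + 1) := by
      rw [hPdef, Fin.sum_univ_succ]
      simp [Fin.val_succ]
    rw [hDdef, hPsucc]
    have h1 : ∑ j : Fin n, c j.castSucc * (p : ℝ) ^ ((j : ℕ) + 1)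
        ≤ ∑ j : Fin n, (p : ℝ) ^ ((j : ℕ) + 1) := by
      apply Finset.sum_le_sum
      intro j _
      have hpow : (0 : ℝ) ≤ (p : ℝ) ^ ((j : ℕ) + 1) := by positivity
      nlinarith [(hc01 j.castSucc).2]
    linarith [(hc01 (Fin.last n)).2]
  -- key numeric bounds
  have key1 : (d / p) * e < G - D := by
    have h1 : d * P < G - D := by nlinarith
    have h2 : (d / p) * e ≤ d * P := by
      rw [← heP, div_mul_eq_mul_div, div_le_iff₀ hp0]
      nlinarith [mul_nonneg hd hPpos.le]
    linarith
  have key2 : G - D < (1 - d / p) * e := by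
    have h2 : ((p : ℝ) - d - 1) * P ≤ (1 - d / p) * e := by
      rw [← heP]
      have hfrac : (1 - d / p) * (((p : ℝ) - 1) * P) = (((p : ℝ) - d) * ((p : ℝ) - 1) * P) / p := by
        field_simp
      rw [hfrac, le_div_iff₀ hp0]
      nlinarith [mul_nonneg hd hPpos.le]
    linarith
  -- choose m
  refine ⟨if d + 1 < β (Fin.last n) ∧ β (Fin.last n) < (p : ℝ) - d - 1 then 0 else -1, ?_, ?_⟩
  · rw [lt_div_iff₀ he]
    have hm : ((if d + 1 < β (Fin.last n) ∧ β (Fin.last n) < (p : ℝ) - d - 1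
        then (0 : ℤ) else -1 : ℤ) : ℝ) = -cl := by
      simp only [hcldef, hcdef]
      split_ifs <;> norm_num
    rw [hm]
    linarith [key1, hid]
  · rw [div_lt_iff₀ he]
    have hm : ((if d + 1 < β (Fin.last n) ∧ β (Fin.last n) < (p : ℝ) - d - 1
        then (0 : ℤ) else -1 : ℤ) : ℝ) = -cl := by
      simp only [hcldef, hcdef]
      split_ifs <;> norm_num
    rw [hm]
    linarith [key2, hid]
end

section
/- Let p ≥ 1 be an integer, d ≥ 0 a real number, n and m integers, and t a real number satisfying m + d/p < t < m + 1 − d/p. Then p·⌈n − t⌉ ≥ ⌈p·n − p·t + d⌉, where ⌈·⌉ denotes the ceiling of a real number. -/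
/-- If `t` is `d`-generic, i.e. `m + d/p < t < m + 1 - d/p` for some integer `m`, then
`p·⌈n - t⌉ ≥ ⌈p·n - p·t + d⌉` for every integer `n`. -/
theorem ceil_contraction_of_generic
    (p : ℕ) (hp : 1 ≤ p) (d : ℝ) (hd : 0 ≤ d) (n m : ℤ) (t : ℝ)
    (h1 : (m : ℝ) + d / p < t) (h2 : t < (m : ℝ) + 1 - d / p) :
    (p : ℤ) * ⌈(n : ℝ) - t⌉ ≥ ⌈(p : ℝ) * (n : ℝ) - (p : ℝ) * t + d⌉ := by
  have hp0 : (0:ℝ) < p := by exact_mod_cast Nat.lt_of_lt_of_le Nat.zero_lt_one hp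
  have hdp : (0:ℝ) ≤ d / p := div_nonneg hd hp0.le
  have hmt : (m:ℝ) < t := lt_of_le_of_lt (le_add_of_nonneg_right hdp) h1
  have htm : t < (m:ℝ) + 1 := lt_of_lt_of_le h2 (by linarith)
  have hceil : ⌈(n : ℝ) - t⌉ = n - m := by
    rw [Int.ceil_eq_iff]
    constructor
    · push_cast; linarith
    · push_cast; linarith
  rw [hceil, ge_iff_le, Int.ceil_le]
  have : t * p > ((m:ℝ) + d / p) * p := by
    exact mul_lt_mul_of_pos_right h1 hp0
  rw [add_mul, div_mul_cancel₀ _ hp0.ne'] at this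
  push_cast
  nlinarith
end

section
/- Let p be a prime number and R a commutative ring (we write p for p·1_R). Let A be the localization of the polynomial ring R[X] at the multiplicative set of powers of X + p, and let s ∈ A denote the inverse of X + p. Then the R-algebra homomorphism ev : R[W] → A determined by ev(W) = s is injective, and for every g ∈ R[W] one has ev(g) ∈ X·A if and only if g lies in the ideal of R[W] generated by 1 − p·W. Equivalently, inside A the intersection of the subring R[s] with the ideal X·A equals the ideal of R[s] generated by X·s = 1 − p·s. -/
open Polynomial

section AuxLemmas
open Finset

variable {R : Type*} [CommRing R]

/-- `Hpoly c g n = ∑ i ≤ n, coeff g i • (X + c)^(n-i)`, i.e. `(X+c)^n · g(1/(X+c))`. -/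
noncomputable def Hpoly (c : R) (g : R[X]) (n : ℕ) : R[X] :=
  ∑ i ∈ Finset.range (n + 1), C (g.coeff i) * (X + C c) ^ (n - i)

lemma Hpoly_mul (c : R) (g : R[X]) {n : ℕ} (m : ℕ) (hn : g.natDegree ≤ n) :
    Hpoly c g (n + m) = Hpoly c g n * (X + C c) ^ m := by
  unfold Hpoly
  rw [Finset.sum_mul,
    ← Finset.sum_subset (show range (n + 1) ⊆ range (n + m + 1) from
        Finset.range_subset_range.2 (by omega))
      (fun i _ hni => by
        rw [Finset.mem_range, not_lt] at hni
        rw [g.coeff_eq_zero_of_natDegree_lt (by omega), map_zero, zero_mul])]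
  refine Finset.sum_congr rfl fun i hi => ?_
  rw [Finset.mem_range] at hi
  rw [mul_assoc, ← pow_add]
  congr 2
  omega

lemma Hpoly_map {A : Type*} [CommRing A] (φ : R[X] →+* A) (c : R) (s : A)
    (hs : s * φ (X + C c) = 1) (g : R[X]) {n : ℕ} (hn : g.natDegree ≤ n) :
    φ (Hpoly c g n) = g.eval₂ (φ.comp C) s * (φ (X + C c)) ^ n := by
  rw [Polynomial.eval₂_eq_sum_range' (φ.comp C) (Nat.lt_succ_of_le hn) s, Hpoly, map_sum,
    Finset.sum_mul]
  refine Finset.sum_congr rfl fun i hi => ?_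
  rw [Finset.mem_range] at hi
  have h1 : φ (X + C c) ^ n = φ (X + C c) ^ i * φ (X + C c) ^ (n - i) := by
    rw [← pow_add]; congr 1; omega
  have key : s ^ i * φ (X + C c) ^ n = φ (X + C c) ^ (n - i) := by
    rw [h1, ← mul_assoc, ← mul_pow, hs, one_pow, one_mul]
  rw [map_mul, map_pow, RingHom.comp_apply, mul_assoc, key]

lemma Hpoly_eq_zero (c : R) (g : R[X]) {n : ℕ} (hn : g.natDegree ≤ n)
    (h : Hpoly c g n = 0) : g = 0 := by
  have hr : (∑ i ∈ range (n + 1), C (g.coeff i) * X ^ (n - i)) = 0 := by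
    have h2 := congrArg (Polynomial.eval₂RingHom C (X - C c)) h
    rw [map_zero, Hpoly, map_sum] at h2
    rw [← h2]
    refine (Finset.sum_congr rfl fun i _ => ?_).symm
    rw [map_mul, map_pow]
    simp [coe_eval₂RingHom]
  have key : ∀ i ≤ n, g.coeff i = 0 := by
    intro i hi
    have h3 := congrArg (fun f : R[X] => f.coeff (n - i)) hr
    simp only [Polynomial.finset_sum_coeff, coeff_C_mul, coeff_X_pow, coeff_zero] at h3
    rw [Finset.sum_eq_single i] at h3
    · simpa using h3
    · intro j hj hji
      rw [Finset.mem_range] at hj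
      rw [if_neg (by omega), mul_zero]
    · intro hni
      exact absurd (Finset.mem_range.2 (by omega)) hni
  ext i
  rcases le_or_gt i n with h' | h'
  · simpa using key i h'
  · simp [g.coeff_eq_zero_of_natDegree_lt (lt_of_le_of_lt hn h')]

lemma Hpoly_eval_zero (c : R) (g : R[X]) (N : ℕ) :
    (Hpoly c g N).eval 0 = ∑ i ∈ range (N + 1), g.coeff i * c ^ (N - i) := by
  simp [Hpoly, eval_finset_sum]

lemma one_sub_C_mul_X_dvd (c : R) (g : R[X]) {N : ℕ} (hN : g.natDegree ≤ N) :
    (1 - C c * X) ∣ (g - C (∑ i ∈ range (N + 1), g.coeff i * c ^ (N - i)) * X ^ N) := by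
  have hg : g = ∑ i ∈ range (N + 1), C (g.coeff i) * X ^ i := by
    conv_lhs => rw [g.as_sum_range' (N + 1) (Nat.lt_succ_of_le hN)]
    exact Finset.sum_congr rfl fun i _ => (Polynomial.C_mul_X_pow_eq_monomial).symm
  have hEq : g - C (∑ i ∈ range (N + 1), g.coeff i * c ^ (N - i)) * X ^ N
      = ∑ i ∈ range (N + 1), (C (g.coeff i) * X ^ i) * (1 - (C c * X) ^ (N - i)) := by
    calc g - C (∑ i ∈ range (N + 1), g.coeff i * c ^ (N - i)) * X ^ N
        = ∑ i ∈ range (N + 1),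
            (C (g.coeff i) * X ^ i - C (g.coeff i) * C (c ^ (N - i)) * X ^ N) := by
          rw [Finset.sum_sub_distrib, ← hg, map_sum, Finset.sum_mul]
          congr 1
          exact Finset.sum_congr rfl fun i _ => by rw [map_mul]
      _ = ∑ i ∈ range (N + 1), (C (g.coeff i) * X ^ i) * (1 - (C c * X) ^ (N - i)) := by
          refine Finset.sum_congr rfl fun i hi => ?_
          rw [Finset.mem_range] at hi
          have hX : (X : R[X]) ^ N = X ^ i * X ^ (N - i) := by rw [← pow_add]; congr 1; omega
          rw [mul_sub, mul_one, mul_pow, ← map_pow, hX]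
          ring
  rw [hEq]
  refine Finset.dvd_sum fun i _ => Dvd.dvd.mul_left ?_ _
  have := sub_dvd_pow_sub_pow 1 (C c * X) (N - i)
  rwa [one_pow] at this


end AuxLemmas

/-- The localization of `R[X]` at the powers of `X + p`. -/
noncomputable abbrev LocAtXAddP (R : Type*) [CommRing R] (p : ℕ) : Type _ :=
  Localization (Submonoid.powers (Polynomial.X + (p : Polynomial R)))

/-- Let `A = R[X][1/(X+p)]` and let `s ∈ A` be the inverse of `X + p`.  Then the
`R`-algebra map `ev : R[W] → A` with `ev W = s` is injective, and for `g ∈ R[W]` one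
has `ev g ∈ X·A` if and only if `g` lies in the ideal generated by `1 - p·W`. -/
theorem eval_inverse_injective_and_mem_X_ideal_iff
    {R : Type*} [CommRing R] (p : ℕ) (hp : p.Prime)
    (s : LocAtXAddP R p)
    (hs : s * algebraMap (Polynomial R) (LocAtXAddP R p)
        (Polynomial.X + (p : Polynomial R)) = 1) :
    Function.Injective
      (Polynomial.eval₂RingHom
        ((algebraMap (Polynomial R) (LocAtXAddP R p)).comp (Polynomial.C : R →+* Polynomial R))
        s) ∧
    ∀ g : Polynomial R,
      (Polynomial.eval₂RingHom
          ((algebraMap (Polynomial R) (LocAtXAddP R p)).comp (Polynomial.C : R →+* Polynomial R))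
          s) g ∈
        Ideal.span
          ({algebraMap (Polynomial R) (LocAtXAddP R p) Polynomial.X} : Set (LocAtXAddP R p)) ↔
      g ∈ Ideal.span ({1 - (p : Polynomial R) * Polynomial.X} : Set (Polynomial R)) := by
  set c : R := (p : R) with hc
  have hpc : (X + (p : R[X])) = X + C c := by rw [hc, Polynomial.C_eq_natCast]
  set φ : R[X] →+* LocAtXAddP R p :=
    (algebraMap (Polynomial R) (LocAtXAddP R p) : R[X] →+* LocAtXAddP R p) with hφ
  have hs' : s * φ (X + C c) = 1 := by rw [hpc.symm]; exact hs
  -- injectivity of the localization map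
  have hφinj : Function.Injective φ := by
    refine IsLocalization.injective (M := Submonoid.powers (X + (p : R[X]))) (LocAtXAddP R p) ?_
    rintro x ⟨k, rfl⟩
    have hmono : (X + (p : R[X])).Monic := by rw [hpc]; exact monic_X_add_C c
    exact (hmono.pow k).mem_nonZeroDivisors
  have hinj : Function.Injective (Polynomial.eval₂RingHom (φ.comp C) s) := by
    rw [injective_iff_map_eq_zero]
    intro g hg
    refine Hpoly_eq_zero c g (le_refl g.natDegree) (hφinj ?_)
    rw [Hpoly_map φ c s hs' g (le_refl g.natDegree), map_zero]
    rw [coe_eval₂RingHom] at hg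
    rw [hg, zero_mul]
  refine ⟨hinj, fun g => ?_⟩
  constructor
  · intro hmem
    rw [Ideal.mem_span_singleton'] at hmem
    obtain ⟨a, ha⟩ := hmem
    obtain ⟨⟨f, t⟩, hft⟩ := IsLocalization.surj (Submonoid.powers (X + (p : R[X]))) a
    obtain ⟨m, hm⟩ := t.2
    have hm' : (X + (p : R[X])) ^ m = (t : R[X]) := hm
    set n := g.natDegree with hn
    have hfa : a * φ ((X + C c) ^ m) = φ f := by
      rw [hpc.symm, hm']; exact hft
    have key : Hpoly c g n * (X + C c) ^ m = f * X * (X + C c) ^ n := by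
      apply hφinj
      rw [map_mul, map_mul, map_mul, map_pow, map_pow,
        Hpoly_map φ c s hs' g (le_refl n)]
      rw [coe_eval₂RingHom] at ha
      rw [← ha]
      rw [map_pow] at hfa
      calc a * φ X * φ (X + C c) ^ n * φ (X + C c) ^ m
          = (a * φ (X + C c) ^ m) * (φ X * φ (X + C c) ^ n) := by ring
        _ = φ f * (φ X * φ (X + C c) ^ n) := by rw [hfa]
        _ = φ f * φ X * φ (X + C c) ^ n := by ring
    have heval := congrArg (fun h : R[X] => h.eval 0) key
    simp only [eval_mul, eval_pow, eval_add, eval_X, eval_C, zero_add, zero_mul,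
      mul_zero] at heval
    -- heval : (Hpoly c g n).eval 0 * c ^ m = 0
    have hS : (∑ i ∈ Finset.range (n + m + 1), g.coeff i * c ^ (n + m - i)) = 0 := by
      rw [← Hpoly_eval_zero c g (n + m), Hpoly_mul c g m (le_refl n)]
      simp only [eval_mul, eval_pow, eval_add, eval_X, eval_C, zero_add]
      exact heval
    have hdvd := one_sub_C_mul_X_dvd c g (show g.natDegree ≤ n + m by omega)
    rw [hS, map_zero, zero_mul, sub_zero] at hdvd
    rw [Ideal.mem_span_singleton]
    have hone : (1 - (p : R[X]) * X) = 1 - C c * X := by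
      rw [hc, Polynomial.C_eq_natCast]
    rw [hone]
    exact hdvd
  · intro hmem
    rw [Ideal.mem_span_singleton] at hmem
    obtain ⟨u, hu⟩ := hmem
    rw [hu, map_mul, Ideal.mem_span_singleton']
    refine ⟨s * (Polynomial.eval₂RingHom (φ.comp C) s) u, ?_⟩
    have h1 : (Polynomial.eval₂RingHom (φ.comp C) s) (1 - (p : R[X]) * X)
        = 1 - (p : LocAtXAddP R p) * s := by
      simp [coe_eval₂RingHom]
    have h2 : φ X * s = 1 - (p : LocAtXAddP R p) * s := by
      have hadd : φ (X + (p : R[X])) = φ X + (p : LocAtXAddP R p) := by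
        rw [map_add, map_natCast]
      linear_combination hs - s * hadd
    rw [h1, ← h2]
    ring
end
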